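/- arXiv:1706.08113 — 2 statements merged into one kernel-verified Lean document; each statement's English description precedes it below -/
import Mathlib

section
/- For 0 < δ < 1, the equation tan(x) = x/(1-δ) has a unique solution x_M in the interval (0, π/2), and x_M → 0 as δ → 0; moreover for small δ, x_M satisfies x_M² = 3δ + O(δ²) in the sense that x_M/√(3δ) → 1 as δ → 0⁺. -/
open Real Filter Topology

private lemma gConvex {δ : ℝ} (hδ1 : δ < 1) :
    StrictConvexOn ℝ (Set.Ico 0 (Real.pi/2)) (fun x => (1-δ) * Real.tan x - x) := by
  have hcos : ∀ x ∈ Set.Ico (0:ℝ) (Real.pi/2), 0 < Real.cos x := fun x hx =>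
    Real.cos_pos_of_mem_Ioo ⟨by linarith [hx.1, Real.pi_pos], hx.2⟩
  have hderiv : ∀ x ∈ Set.Ioo (0:ℝ) (Real.pi/2),
      HasDerivAt (fun x => (1-δ) * Real.tan x - x) ((1-δ) * (1/Real.cos x^2) - 1) x := by
    intro x hx
    have hc : Real.cos x ≠ 0 := (hcos x ⟨hx.1.le, hx.2⟩).ne'
    exact ((Real.hasDerivAt_tan hc).const_mul (1-δ)).sub (hasDerivAt_id' x)
  apply StrictMonoOn.strictConvexOn_of_deriv (convex_Ico _ _)
  · apply ContinuousOn.sub _ continuousOn_id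
    exact (Real.continuousOn_tan.mono (fun x hx => (hcos x hx).ne')).const_smul (1-δ)
  · rw [interior_Ico]
    intro x hx y hy hxy
    rw [(hderiv x hx).deriv, (hderiv y hy).deriv]
    have h1 : 0 < Real.cos y := hcos y ⟨hy.1.le, hy.2⟩
    have h2 : Real.cos y < Real.cos x :=
      Real.cos_lt_cos_of_nonneg_of_le_pi hx.1.le (by linarith [hy.2, Real.pi_pos]) hxy
    have h3 : Real.cos y ^ 2 < Real.cos x ^ 2 := by nlinarith
    have h4 : (1:ℝ)/Real.cos x^2 < 1/Real.cos y^2 :=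
      one_div_lt_one_div_of_lt (by positivity) h3
    have h5 : 0 < 1 - δ := by linarith
    nlinarith

private lemma neg_between {B : ℝ} {f : ℝ → ℝ}
    (hc : StrictConvexOn ℝ (Set.Ico 0 B) f) (h0 : f 0 = 0) {r : ℝ}
    (hr : r ∈ Set.Ioo 0 B) (hfr : f r = 0) {x : ℝ} (hx : x ∈ Set.Ioo 0 r) : f x < 0 := by
  have h01 : (0:ℝ) ∈ Set.Ico 0 B := ⟨le_refl _, hr.1.trans hr.2⟩
  have hrm : r ∈ Set.Ico 0 B := ⟨hr.1.le, hr.2⟩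
  have ha : (0:ℝ) < 1 - x/r := by
    have : x/r < 1 := (div_lt_one hr.1).mpr hx.2
    linarith
  have hb : (0:ℝ) < x/r := div_pos hx.1 hr.1
  have := hc.2 h01 hrm hr.1.ne (by exact ha) hb (by ring)
  have hxe : (1 - x/r) • (0:ℝ) + (x/r) • r = x := by
    field_simp
    rw [smul_eq_mul, smul_eq_mul, mul_zero, zero_add]; exact div_mul_cancel₀ x hr.1.ne'
  rw [hxe] at this
  simpa [h0, hfr] using this

private lemma ex_root {δ : ℝ} (hδ0 : 0 < δ) (hδ1 : δ < 1) :
    ∃ x ∈ Set.Ioo 0 (Real.pi/2), (1-δ) * Real.tan x = x := by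
  have hπ := Real.pi_pos
  set b := Real.arctan (Real.pi / (1-δ)) with hbdef
  have hb0 : 0 < b := by
    rw [hbdef, ← Real.arctan_zero]
    exact Real.arctan_strictMono (div_pos Real.pi_pos (by linarith))
  have hbπ : b < Real.pi/2 := Real.arctan_lt_pi_div_two _
  have hgb : 0 < (1-δ) * Real.tan b - b := by
    rw [hbdef, Real.tan_arctan]
    have h1 : (1-δ) * (Real.pi/(1-δ)) = Real.pi := by
      field_simp
      exact div_self (sub_pos.mpr hδ1).ne'
    rw [h1]
    linarith
  set a := min (Real.sqrt δ) (b/2) with hadef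
  have ha0 : 0 < a := lt_min (Real.sqrt_pos.mpr hδ0) (by linarith)
  have hab : a < b := (min_le_right _ _).trans_lt (by linarith)
  have haπ : a < Real.pi/2 := hab.trans hbπ
  have hcosa : 1 - δ < Real.cos a := by
    have h1 : a^2 ≤ δ := by
      calc a^2 ≤ (Real.sqrt δ)^2 := by
            apply pow_le_pow_left₀ ha0.le (min_le_left _ _)
        _ = δ := Real.sq_sqrt hδ0.le
    have h2 := Real.one_sub_sq_div_two_le_cos (x := a)
    linarith
  have hca : 0 < Real.cos a := by linarith
  have hsa : 0 < Real.sin a := Real.sin_pos_of_pos_of_lt_pi ha0 (by linarith)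
  have hga : (1-δ) * Real.tan a - a < 0 := by
    rw [Real.tan_eq_sin_div_cos]
    have h1 : (1-δ) * (Real.sin a / Real.cos a) < Real.sin a := by
      rw [mul_div_assoc', div_lt_iff₀ hca]
      nlinarith
    linarith [Real.sin_lt ha0]
  have hcont : ContinuousOn (fun x => (1-δ) * Real.tan x - x) (Set.Icc a b) := by
    apply ContinuousOn.sub _ continuousOn_id
    apply (Real.continuousOn_tan.mono ?_).const_smul (1-δ)
    intro x hx
    have : 0 < Real.cos x := Real.cos_pos_of_mem_Ioo
      ⟨by linarith [hx.1], lt_of_le_of_lt hx.2 hbπ⟩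
    exact this.ne'
  have hsub := intermediate_value_Ioo hab.le hcont
  have h0mem : (0:ℝ) ∈ Set.Ioo ((1-δ) * Real.tan a - a) ((1-δ) * Real.tan b - b) := ⟨hga, hgb⟩
  obtain ⟨x, hx, hgx⟩ := hsub h0mem
  exact ⟨x, ⟨ha0.trans hx.1, hx.2.trans hbπ⟩, by dsimp at hgx; linarith⟩

private lemma exu {δ : ℝ} (hδ : δ ∈ Set.Ioo (0:ℝ) 1) :
    ∃ x, x ∈ Set.Ioo 0 (Real.pi/2) ∧ (1-δ) * Real.tan x = x ∧
      ∀ y ∈ Set.Ioo 0 (Real.pi/2), (1-δ) * Real.tan y = y → y = x := by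
  obtain ⟨x, hx, hgx⟩ := ex_root hδ.1 hδ.2
  refine ⟨x, hx, hgx, fun y hy hgy => ?_⟩
  by_contra hne
  have h0 : (fun z => (1-δ) * Real.tan z - z) 0 = 0 := by simp
  have hgx' : (fun z => (1-δ) * Real.tan z - z) x = 0 := by dsimp; linarith
  have hgy' : (fun z => (1-δ) * Real.tan z - z) y = 0 := by dsimp; linarith
  rcases lt_or_gt_of_ne hne with h | h
  · have := neg_between (gConvex hδ.2) h0 hx hgx' ⟨hy.1, h⟩
    beta_reduce at this; linarith
  · have := neg_between (gConvex hδ.2) h0 hy hgy' ⟨hx.1, h⟩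
    beta_reduce at this; linarith

private lemma limit_cube :
    Tendsto (fun x => (Real.sin x - x * Real.cos x)/x^3) (𝓝[>] 0) (𝓝 (1/3)) := by
  have key : ∀ x ∈ Set.Ioo (0:ℝ) 1,
      |(Real.sin x - x * Real.cos x)/x^3 - 1/3| ≤ x := by
    intro x hx
    obtain ⟨hx0, hx1⟩ := hx
    have habs : |x| ≤ 1 := by rw [abs_of_pos hx0]; linarith
    have h1 := Real.sin_bound habs
    have h2 := Real.cos_bound habs
    rw [abs_of_pos hx0] at h1 h2
    have hnum : |Real.sin x - x * Real.cos x - x^3/3| ≤ x^4 := by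
      have e : Real.sin x - x * Real.cos x - x^3/3
          = (Real.sin x - (x - x^3/6)) - x * (Real.cos x - (1 - x^2/2)) := by ring
      rw [e]
      have h3 : |x * (Real.cos x - (1 - x^2/2))| ≤ x * (x^4 * (5/96)) := by
        rw [abs_mul, abs_of_pos hx0]
        exact mul_le_mul_of_nonneg_left h2 hx0.le
      calc |(Real.sin x - (x - x^3/6)) - x * (Real.cos x - (1 - x^2/2))|
          ≤ |Real.sin x - (x - x^3/6)| + |x * (Real.cos x - (1 - x^2/2))| := abs_sub _ _
        _ ≤ x^4 * (5/96) + x * (x^4 * (5/96)) := add_le_add (h1.trans (by have : x^5 ≤ x^4 := pow_le_pow_of_le_one hx0.le hx1.le (by norm_num); nlinarith [pow_pos hx0 4])) h3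
        _ ≤ x^4 := by
            have h5 : x^5 ≤ x^4 := pow_le_pow_of_le_one hx0.le hx1.le (by norm_num)
            have h6 : 0 < x^4 := by positivity
            nlinarith
    have hx3 : (0:ℝ) < x^3 := by positivity
    have e2 : (Real.sin x - x * Real.cos x)/x^3 - 1/3
        = (Real.sin x - x * Real.cos x - x^3/3)/x^3 := by
      field_simp
    rw [e2, abs_div, abs_of_pos hx3, div_le_iff₀ hx3]
    calc |Real.sin x - x * Real.cos x - x^3/3| ≤ x^4 := hnum
      _ = x * x^3 := by ring
  have hmem : Set.Ioo (0:ℝ) 1 ∈ 𝓝[>] (0:ℝ) :=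
    Ioo_mem_nhdsGT_of_mem ⟨le_refl 0, one_pos⟩
  have hzero : Tendsto (fun x : ℝ => x) (𝓝[>] (0:ℝ)) (𝓝 0) :=
    tendsto_id.mono_right nhdsWithin_le_nhds
  have hsq : Tendsto (fun x => (Real.sin x - x * Real.cos x)/x^3 - 1/3) (𝓝[>] (0:ℝ)) (𝓝 0) := by
    apply squeeze_zero_norm' _ hzero
    filter_upwards [hmem] with x hx
    simpa using key x hx
  have := hsq.add (tendsto_const_nhds (x := (1:ℝ)/3))
  simpa using this

private lemma limit_sin_div : Tendsto (fun x => Real.sin x / x) (𝓝[>] 0) (𝓝 1) := by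
  have h := hasDerivAt_iff_tendsto_slope.mp (Real.hasDerivAt_sin 0)
  rw [Real.cos_zero] at h
  have hle : 𝓝[>] (0:ℝ) ≤ 𝓝[≠] (0:ℝ) :=
    nhdsWithin_mono _ (fun x hx => ne_of_gt hx)
  have h2 := h.mono_left hle
  apply h2.congr
  intro x
  simp [slope_def_field, div_eq_div_iff]

private lemma limitL :
    Tendsto (fun x => x^2 * Real.sin x / (3 * (Real.sin x - x * Real.cos x))) (𝓝[>] 0) (𝓝 1) := by
  have h3 : Tendsto (fun x => (Real.sin x / x) / (3 * ((Real.sin x - x * Real.cos x)/x^3)))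
      (𝓝[>] (0:ℝ)) (𝓝 1) := by
    have e : (1:ℝ) = 1 / (3 * (1/3)) := by norm_num
    rw [e]
    exact limit_sin_div.div (tendsto_const_nhds.mul limit_cube) (by norm_num)
  apply h3.congr'
  filter_upwards [self_mem_nhdsWithin] with x hx
  have hx0 : (0:ℝ) < x := hx
  by_cases hd : Real.sin x - x * Real.cos x = 0
  · simp [hd]
  · field_simp

/-- for 0 < δ < 1, tan x = x/(1-δ) has a unique solution x_M in
(0, π/2); x_M → 0 as δ → 0⁺, and x_M/√(3δ) → 1 as δ → 0⁺. -/
theorem minnaert_root_exists_unique_asymptotics :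
    ∃ m : ℝ → ℝ,
      (∀ δ ∈ Set.Ioo (0:ℝ) 1,
        m δ ∈ Set.Ioo 0 (Real.pi / 2) ∧ Real.tan (m δ) = m δ / (1 - δ) ∧
        ∀ x ∈ Set.Ioo (0:ℝ) (Real.pi / 2), Real.tan x = x / (1 - δ) → x = m δ) ∧
      Tendsto m (𝓝[>] 0) (𝓝 0) ∧
      Tendsto (fun δ => m δ / Real.sqrt (3 * δ)) (𝓝[>] 0) (𝓝 1) := by
  classical
  set m : ℝ → ℝ := fun δ =>
    if h : δ ∈ Set.Ioo (0:ℝ) 1 then (exu h).choose else 0 with hmdef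
  have hm : ∀ δ (h : δ ∈ Set.Ioo (0:ℝ) 1),
      m δ ∈ Set.Ioo 0 (Real.pi/2) ∧ (1-δ) * Real.tan (m δ) = m δ ∧
      ∀ y ∈ Set.Ioo 0 (Real.pi/2), (1-δ) * Real.tan y = y → y = m δ := by
    intro δ h
    rw [hmdef]
    simp only [dif_pos h]
    exact (exu h).choose_spec
  -- Part 1
  have part1 : ∀ δ ∈ Set.Ioo (0:ℝ) 1,
      m δ ∈ Set.Ioo 0 (Real.pi / 2) ∧ Real.tan (m δ) = m δ / (1 - δ) ∧
      ∀ x ∈ Set.Ioo (0:ℝ) (Real.pi / 2), Real.tan x = x / (1 - δ) → x = m δ := by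
    intro δ hδ
    obtain ⟨h1, h2, h3⟩ := hm δ hδ
    have hne : (1:ℝ) - δ ≠ 0 := by intro h; linarith [hδ.2]
    refine ⟨h1, ?_, ?_⟩
    · rw [eq_div_iff hne]; linarith [h2, mul_comm (Real.tan (m δ)) (1-δ)]
    · intro x hx htan
      apply h3 x hx
      rw [eq_div_iff hne] at htan
      linarith [mul_comm (Real.tan x) (1-δ)]
  -- Part 2
  have part2 : Tendsto m (𝓝[>] (0:ℝ)) (𝓝 0) := by
    rw [Metric.tendsto_nhdsWithin_nhds]
    intro ε hε
    have hπ := Real.pi_pos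
    set ε' := min (ε/2) (Real.pi/4) with hε'def
    have hε'0 : 0 < ε' := lt_min (by linarith) (by linarith)
    have hε'2 : ε' < Real.pi/2 := (min_le_right _ _).trans_lt (by linarith)
    have htan : ε' < Real.tan ε' := Real.lt_tan hε'0 hε'2
    have htanpos : 0 < Real.tan ε' := hε'0.trans htan
    refine ⟨min (1 - ε'/Real.tan ε') 1, ?_, ?_⟩
    · apply lt_min _ one_pos
      have : ε'/Real.tan ε' < 1 := (div_lt_one htanpos).mpr htan
      linarith
    · intro x hx hdist
      have hx0 : (0:ℝ) < x := hx
      rw [Real.dist_eq, sub_zero, abs_of_pos hx0] at hdist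
      have hx1 : x < 1 := lt_of_lt_of_le hdist (min_le_right _ _)
      have hxδ : x < 1 - ε'/Real.tan ε' := lt_of_lt_of_le hdist (min_le_left _ _)
      obtain ⟨hmem, heq, _⟩ := hm x ⟨hx0, hx1⟩
      have hgε' : 0 < (1-x) * Real.tan ε' - ε' := by
        have h1 : ε'/Real.tan ε' < 1 - x := by linarith
        rw [div_lt_iff₀ htanpos] at h1
        linarith
      have hlt : m x < ε' := by
        by_contra hcon
        push_neg at hcon
        rcases eq_or_lt_of_le hcon with hE | hL
        · rw [← hE] at heq; linarith
        · have := neg_between (gConvex hx1) (by simp) hmem (by show (1-x) * Real.tan (m x) - m x = 0; linarith)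
            ⟨hε'0, hL⟩
          have h2 : (1-x) * Real.tan ε' - ε' < 0 := this
          linarith
      rw [Real.dist_eq, sub_zero, abs_of_pos hmem.1]
      have : ε' ≤ ε/2 := min_le_left _ _
      linarith
  refine ⟨m, part1, part2, ?_⟩
  -- Part 3
  have hmem : ∀ᶠ δ in 𝓝[>] (0:ℝ), δ ∈ Set.Ioo (0:ℝ) 1 :=
    Ioo_mem_nhdsGT_of_mem ⟨le_refl 0, one_pos⟩
  have hmpos : Tendsto m (𝓝[>] (0:ℝ)) (𝓝[>] (0:ℝ)) := by
    rw [tendsto_nhdsWithin_iff]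
    refine ⟨part2, ?_⟩
    filter_upwards [hmem] with δ hδ
    exact (hm δ hδ).1.1
  have hL := limitL.comp hmpos
  have hratio : Tendsto (fun δ => (m δ)^2/(3*δ)) (𝓝[>] (0:ℝ)) (𝓝 1) := by
    apply hL.congr'
    filter_upwards [hmem] with δ hδ
    obtain ⟨hmem', heq, _⟩ := hm δ hδ
    have hπ := Real.pi_pos
    have hs : 0 < Real.sin (m δ) :=
      Real.sin_pos_of_pos_of_lt_pi hmem'.1 (by linarith [hmem'.2])
    have hc : 0 < Real.cos (m δ) :=
      Real.cos_pos_of_mem_Ioo ⟨by linarith [hmem'.1], hmem'.2⟩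
    have key : δ * Real.sin (m δ) = Real.sin (m δ) - m δ * Real.cos (m δ) := by
      rw [Real.tan_eq_sin_div_cos, mul_div_assoc', div_eq_iff hc.ne'] at heq
      nlinarith
    show (m δ)^2 * Real.sin (m δ) / (3*(Real.sin (m δ) - m δ * Real.cos (m δ)))
        = (m δ)^2/(3*δ)
    rw [← key]
    rw [div_eq_div_iff (mul_pos (show (0:ℝ) < 3 by norm_num) (mul_pos hδ.1 hs)).ne' (mul_pos (show (0:ℝ) < 3 by norm_num) hδ.1).ne']
    ring
  have hsq : Tendsto (fun δ => Real.sqrt ((m δ)^2/(3*δ))) (𝓝[>] (0:ℝ)) (𝓝 1) := by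
    have := (Real.continuous_sqrt.tendsto 1).comp hratio
    rw [Real.sqrt_one] at this; exact this
  apply hsq.congr'
  filter_upwards [hmem] with δ hδ
  have hmpos' := (hm δ hδ).1.1
  rw [Real.sqrt_div (by positivity) _, Real.sqrt_sq hmpos'.le]
end

section
/- The function g(x) = 1 - x cot(x), extended continuously by g(0) = 0, is strictly increasing on [0, π), satisfies g(x) = x²/3 + O(x⁴) near 0, and g(x) → +∞ as x → π⁻. -/
open Real Filter Topology Asymptotics

/-- Fifth-order bound for sin. -/
lemma sin_bound5 {x : ℝ} (hx0 : 0 ≤ x) (hx1 : x ≤ 1) :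
    |Real.sin x - (x - x ^ 3 / 6)| ≤ 5 / 96 * x ^ 5 := by
  set f : ℝ → ℝ := fun t => Real.sin t - (t - t ^ 3 / 6) with hf
  have hderiv : ∀ t ∈ Set.Icc (0:ℝ) x,
      HasDerivWithinAt f (Real.cos t - (1 - t ^ 2 / 2)) (Set.Icc 0 x) t := by
    intro t _
    have h1 : HasDerivAt f (Real.cos t - (1 - t ^ 2 / 2)) t := by
      have := (Real.hasDerivAt_sin t).sub
        (((hasDerivAt_id t).sub (((hasDerivAt_pow 3 t)).div_const 6)))
      refine this.congr_deriv ?_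
      ring
    exact h1.hasDerivWithinAt
  have hbound : ∀ t ∈ Set.Icc (0:ℝ) x, ‖Real.cos t - (1 - t ^ 2 / 2)‖ ≤ 5 / 96 * x ^ 4 := by
    intro t ht
    have habs : |t| ≤ 1 := by
      rw [abs_of_nonneg ht.1]; exact ht.2.trans hx1
    have := Real.cos_bound habs
    rw [Real.norm_eq_abs]
    refine this.trans ?_
    rw [abs_of_nonneg ht.1, mul_comm]
    gcongr
    exacts [ht.1, ht.2]
  have key := (convex_Icc (0:ℝ) x).norm_image_sub_le_of_norm_hasDerivWithin_le
    hderiv hbound (Set.left_mem_Icc.2 hx0) (Set.right_mem_Icc.2 hx0)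
  simp only [hf, Real.sin_zero] at key
  norm_num at key
  rw [abs_of_nonneg hx0] at key
  calc |Real.sin x - (x - x ^ 3 / 6)| ≤ 5 / 96 * x ^ 4 * x := key
    _ = 5 / 96 * x ^ 5 := by ring

/-- Key quantitative bound near 0. -/
lemma cot_key_bound {x : ℝ} (hx0 : 0 < x) (hx1 : x ≤ 1) :
    |(1 - x * (Real.cos x / Real.sin x)) - x ^ 2 / 3| ≤ 2 * x ^ 4 := by
  have hxpi : x < Real.pi := lt_of_le_of_lt hx1 (by linarith [Real.pi_gt_three])
  have hs : 0 < Real.sin x := Real.sin_pos_of_pos_of_lt_pi hx0 hxpi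
  have hslb : 3 * x / 4 ≤ Real.sin x := by
    have := Real.sin_gt_sub_cube hx0
    nlinarith [pow_le_pow_of_le_one hx0.le hx1 (show 1 ≤ 3 by norm_num),
      pow_pos hx0 3]
  have habs : |x| ≤ 1 := by rw [abs_of_nonneg hx0.le]; exact hx1
  have hsb := sin_bound5 hx0.le hx1
  have hcb := Real.cos_bound habs
  rw [abs_of_nonneg hx0.le] at hcb
  set e1 := Real.sin x - (x - x ^ 3 / 6) with he1
  set e2 := Real.cos x - (1 - x ^ 2 / 2) with he2
  have hN : Real.sin x - (x ^ 2 / 3) * Real.sin x - x * Real.cos x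
      = x ^ 5 / 18 + e1 * (1 - x ^ 2 / 3) - x * e2 := by
    rw [he1, he2]; ring
  have hNb : |Real.sin x - (x ^ 2 / 3) * Real.sin x - x * Real.cos x| ≤ x ^ 5 := by
    rw [hN]
    have h1 : |e1 * (1 - x ^ 2 / 3)| ≤ 5 / 96 * x ^ 5 := by
      rw [abs_mul]
      have : |1 - x ^ 2 / 3| ≤ 1 := by
        rw [abs_of_nonneg (by nlinarith)]; nlinarith
      calc |e1| * |1 - x ^ 2 / 3| ≤ (5 / 96 * x ^ 5) * 1 := by
            exact mul_le_mul hsb this (abs_nonneg _) (by positivity)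
        _ = 5 / 96 * x ^ 5 := by ring
    have h2 : |x * e2| ≤ 5 / 96 * x ^ 5 := by
      rw [abs_mul, abs_of_nonneg hx0.le]
      calc x * |e2| ≤ x * (x ^ 4 * (5 / 96)) := by
            exact mul_le_mul_of_nonneg_left hcb hx0.le
        _ = 5 / 96 * x ^ 5 := by ring
    have h3 : |x ^ 5 / 18| = x ^ 5 / 18 := abs_of_nonneg (by positivity)
    calc |x ^ 5 / 18 + e1 * (1 - x ^ 2 / 3) - x * e2|
        ≤ |x ^ 5 / 18| + |e1 * (1 - x ^ 2 / 3)| + |x * e2| := by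
          exact (abs_sub _ _).trans (by gcongr; exact abs_add_le _ _)
      _ ≤ x ^ 5 / 18 + 5 / 96 * x ^ 5 + 5 / 96 * x ^ 5 := by rw [h3]; gcongr
      _ ≤ x ^ 5 := by nlinarith [pow_pos hx0 5]
  have heq : (1 - x * (Real.cos x / Real.sin x)) - x ^ 2 / 3
      = (Real.sin x - (x ^ 2 / 3) * Real.sin x - x * Real.cos x) / Real.sin x := by
    field_simp
    ring
  rw [heq, abs_div, abs_of_pos hs]
  rw [div_le_iff₀ hs]
  calc |Real.sin x - (x ^ 2 / 3) * Real.sin x - x * Real.cos x| ≤ x ^ 5 := hNb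
    _ ≤ 2 * x ^ 4 * (3 * x / 4) := by nlinarith [pow_pos hx0 4]
    _ ≤ 2 * x ^ 4 * Real.sin x := by
        have : (0:ℝ) ≤ 2 * x ^ 4 := by positivity
        exact mul_le_mul_of_nonneg_left hslb this

/-- g(x) = 1 - x cot x (with g(0) = 0) is strictly increasing on
[0, π), satisfies g(x) = x²/3 + O(x⁴) near 0 (from the right), and g(x) → +∞ as
x → π⁻. -/
theorem one_sub_x_cot_x_properties
    (g : ℝ → ℝ)
    (hg0 : g 0 = 0)
    (hg : ∀ x ∈ Set.Ioo (0:ℝ) Real.pi, g x = 1 - x * (Real.cos x / Real.sin x)) :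
    StrictMonoOn g (Set.Ico 0 Real.pi) ∧
    (fun x => g x - x ^ 2 / 3) =O[𝓝[≥] 0] (fun x => x ^ 4) ∧
    Tendsto g (𝓝[<] Real.pi) atTop := by
  have hpi1 : (1:ℝ) < Real.pi := by linarith [Real.pi_gt_three]
  -- eventual bound
  have hbound : ∀ x ∈ Set.Ico (0:ℝ) 1, |g x - x ^ 2 / 3| ≤ 2 * x ^ 4 := by
    rintro x ⟨hx0, hx1⟩
    rcases eq_or_lt_of_le hx0 with rfl | hx0'
    · simp [hg0]
    · rw [hg x ⟨hx0', hx1.trans hpi1⟩]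
      exact cot_key_bound hx0' hx1.le
  have hIco : Set.Ico (0:ℝ) 1 ∈ 𝓝[≥] (0:ℝ) :=
    Ico_mem_nhdsGE_of_mem (by constructor <;> norm_num)
  refine ⟨?_, ?_, ?_⟩
  · -- strict mono
    apply strictMonoOn_of_deriv_pos (convex_Ico 0 Real.pi)
    · -- continuity
      intro x hx
      rcases eq_or_lt_of_le hx.1 with rfl | hx0
      · -- continuity at 0 within
        unfold ContinuousWithinAt
        rw [hg0]
        apply squeeze_zero_norm' (a := fun x => x ^ 2 / 3 + 2 * x ^ 4)
        · have hmem : Set.Ico (0:ℝ) 1 ∈ 𝓝[Set.Ico (0:ℝ) Real.pi] (0:ℝ) := by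
            apply mem_nhdsWithin.2
            exact ⟨Set.Iio 1, isOpen_Iio, by norm_num, by
              rintro y ⟨hy1, hy2⟩; exact ⟨hy2.1, hy1⟩⟩
          filter_upwards [hmem] with y hy
          have := hbound y hy
          rw [Real.norm_eq_abs]
          calc |g y| ≤ |g y - y ^ 2 / 3| + |y ^ 2 / 3| := by
                have := abs_sub_abs_le_abs_sub (g y) (y ^ 2 / 3)
                have h2 := abs_add_le (g y - y ^ 2 / 3) (y ^ 2 / 3)
                simpa using h2
            _ ≤ 2 * y ^ 4 + y ^ 2 / 3 := by
                rw [abs_of_nonneg (by positivity : (0:ℝ) ≤ y ^ 2 / 3)]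
                gcongr
            _ = y ^ 2 / 3 + 2 * y ^ 4 := by ring
        · have hc : Continuous (fun x : ℝ => x ^ 2 / 3 + 2 * x ^ 4) := by fun_prop
          exact (hc.tendsto' 0 0 (by norm_num)).mono_left nhdsWithin_le_nhds
      · -- continuity at interior points
        have hopen : Set.Ioo (0:ℝ) Real.pi ∈ 𝓝 x := Ioo_mem_nhds hx0 hx.2
        have heq : g =ᶠ[𝓝 x] fun y => 1 - y * (Real.cos y / Real.sin y) :=
          eventually_of_mem hopen (fun y hy => hg y hy)
        have hs : Real.sin x ≠ 0 :=
          (Real.sin_pos_of_pos_of_lt_pi hx0 hx.2).ne'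
        have hc : ContinuousAt (fun y => 1 - y * (Real.cos y / Real.sin y)) x := by
          have : ContinuousAt Real.sin x := Real.continuous_sin.continuousAt
          fun_prop (disch := assumption)
        exact (hc.congr heq.symm).continuousWithinAt
    · -- derivative positive on interior
      intro x hx
      rw [interior_Ico] at hx
      obtain ⟨hx0, hxpi⟩ := hx
      have hs : 0 < Real.sin x := Real.sin_pos_of_pos_of_lt_pi hx0 hxpi
      have hq : HasDerivAt (fun y => Real.cos y / Real.sin y)
          ((-Real.sin x * Real.sin x - Real.cos x * Real.cos x) / Real.sin x ^ 2) x :=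
        (Real.hasDerivAt_cos x).div (Real.hasDerivAt_sin x) hs.ne'
      have hp : HasDerivAt (fun y => 1 - y * (Real.cos y / Real.sin y))
          (0 - (1 * (Real.cos x / Real.sin x) +
            x * ((-Real.sin x * Real.sin x - Real.cos x * Real.cos x) / Real.sin x ^ 2))) x :=
        (hasDerivAt_const x (1:ℝ)).sub ((hasDerivAt_id x).mul hq)
      have heq : g =ᶠ[𝓝 x] fun y => 1 - y * (Real.cos y / Real.sin y) :=
        eventually_of_mem (Ioo_mem_nhds hx0 hxpi) (fun y hy => hg y hy)
      rw [heq.deriv_eq, hp.deriv]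
      have htrig : -Real.sin x * Real.sin x - Real.cos x * Real.cos x = -1 := by
        nlinarith [Real.sin_sq_add_cos_sq x]
      rw [htrig]
      have hval : 0 - (1 * (Real.cos x / Real.sin x) + x * (-1 / Real.sin x ^ 2))
          = (x - Real.sin x * Real.cos x) / Real.sin x ^ 2 := by
        field_simp
        ring
      rw [hval]
      apply div_pos _ (by positivity)
      have h1 : Real.sin x * Real.cos x ≤ Real.sin x := by
        nlinarith [Real.cos_le_one x, hs]
      have h2 : Real.sin x < x := Real.sin_lt hx0
      linarith
  · -- big O
    rw [Asymptotics.isBigO_iff]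
    refine ⟨2, ?_⟩
    filter_upwards [hIco] with x hx
    rw [Real.norm_eq_abs, Real.norm_eq_abs, abs_of_nonneg (by positivity : (0:ℝ) ≤ x ^ 4)]
    exact hbound x hx
  · -- tendsto atTop
    have h1 : Tendsto Real.sin (𝓝[<] Real.pi) (𝓝[>] 0) := by
      rw [tendsto_nhdsWithin_iff]
      constructor
      · have : Tendsto Real.sin (𝓝 Real.pi) (𝓝 (Real.sin Real.pi)) :=
          Real.continuous_sin.continuousAt
        rw [Real.sin_pi] at this
        exact this.mono_left nhdsWithin_le_nhds
      · filter_upwards [Ioo_mem_nhdsLT_of_mem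
          (Set.mem_Ioc.2 ⟨Real.pi_pos, le_rfl⟩)] with y hy
        exact Real.sin_pos_of_pos_of_lt_pi hy.1 hy.2
    have h2 : Tendsto (fun x => (Real.sin x)⁻¹) (𝓝[<] Real.pi) atTop :=
      tendsto_inv_nhdsGT_zero.comp h1
    have h3 : Tendsto (fun x => x * Real.cos x) (𝓝[<] Real.pi) (𝓝 (Real.pi * Real.cos Real.pi)) :=
      ((continuous_id.mul Real.continuous_cos).tendsto Real.pi).mono_left nhdsWithin_le_nhds
    have hneg : Real.pi * Real.cos Real.pi < 0 := by
      rw [Real.cos_pi]; nlinarith [Real.pi_pos]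
    have h4 : Tendsto (fun x => (x * Real.cos x) * (Real.sin x)⁻¹) (𝓝[<] Real.pi) atBot :=
      h3.neg_mul_atTop hneg h2
    have h5 : Tendsto (fun x => 1 - (x * Real.cos x) * (Real.sin x)⁻¹) (𝓝[<] Real.pi) atTop := by
      have hneg' := tendsto_neg_atBot_atTop.comp h4
      have := tendsto_atTop_add_const_left _ 1 hneg'
      refine this.congr (fun y => ?_)
      simp [Function.comp, sub_eq_add_neg]
    apply h5.congr'
    filter_upwards [Ioo_mem_nhdsLT_of_mem (Set.mem_Ioc.2 ⟨Real.pi_pos, le_rfl⟩)] with y hy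
    rw [hg y hy]
    field_simp
end
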